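/- Let X be a real N×P matrix with full column rank, V a real N×L matrix, a_N > 0 and l_N > 0 with σ_min((I_N − P_X)V) ≥ l_N, and set C = a_N·V. Let (Ω, F, ℙ) be a probability space and ε : Ω → ℝ^N a square-integrable random vector with E[ε_i] = 0 for all i and E[ε_i ε_j] = σ_y² if i = j and 0 otherwise. Then the random vector β̂_C − β_C := (Cᵀ(I_N − P_X)C)⁻¹Cᵀ(I_N − P_X)ε satisfies E[‖β̂_C − β_C‖₂²] ≤ σ_y²·L/(a_N²·l_N²). -/

import Mathlib

open Matrix MeasureTheory ProbabilityTheory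

/-- The orthogonal projection matrix onto the column space of `M`:
`P_M = M (Mᵀ M)⁻¹ Mᵀ`. -/
noncomputable def proj {N K : ℕ} (M : Matrix (Fin N) (Fin K) ℝ) :
    Matrix (Fin N) (Fin N) ℝ :=
  M * (Mᵀ * M)⁻¹ * Mᵀ

lemma trace_inv_le {L : ℕ} {B : Matrix (Fin L) (Fin L) ℝ} (hB : Bᵀ = B) {lam : ℝ}
    (hlam : 0 < lam) (hq : ∀ v : Fin L → ℝ, lam * (∑ i, v i ^ 2) ≤ v ⬝ᵥ B *ᵥ v) :
    IsUnit B.det ∧ ∑ j, B⁻¹ j j ≤ L / lam := by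
  have hherm : B.IsHermitian := by
    rw [Matrix.IsHermitian, conjTranspose_eq_transpose_of_trivial, hB]
  have hpd : B.PosDef := by
    refine Matrix.PosDef.of_dotProduct_mulVec_pos hherm fun x hx => ?_
    have hpos : 0 < ∑ i, x i ^ 2 := by
      obtain ⟨i, hi⟩ := Function.ne_iff.mp hx
      exact Finset.sum_pos' (fun j _ => sq_nonneg _)
        ⟨i, Finset.mem_univ i, sq_pos_of_ne_zero hi⟩
    have h2 := hq x
    have h3 : (0:ℝ) < lam * ∑ i, x i ^ 2 := mul_pos hlam hpos
    simpa using lt_of_lt_of_le h3 h2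
  have hdet : IsUnit B.det := hpd.det_pos.ne'.isUnit
  refine ⟨hdet, ?_⟩
  have hbound : ∀ j, B⁻¹ j j ≤ 1 / lam := by
    intro j
    obtain ⟨w, hw⟩ : ∃ w, w = B⁻¹ *ᵥ Pi.single j 1 := ⟨_, rfl⟩
    have hBw : B *ᵥ w = Pi.single j 1 := by
      rw [hw, Matrix.mulVec_mulVec, Matrix.mul_nonsing_inv _ hdet, Matrix.one_mulVec]
    have hwj : w j = B⁻¹ j j := by
      rw [hw, Matrix.mulVec_single]; simp
    have hdot : w ⬝ᵥ B *ᵥ w = w j := by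
      rw [hBw, dotProduct_single, mul_one]
    have hqt : lam * (∑ i, w i ^ 2) ≤ w j := by
      have h := hq w
      rwa [hdot] at h
    have ht0 : 0 ≤ w j := le_trans (by positivity) hqt
    have hcs : (w j) ^ 2 ≤ ∑ i, w i ^ 2 := by
      have hc := Finset.sum_mul_sq_le_sq_mul_sq Finset.univ (Pi.single j 1 : Fin L → ℝ) w
      have h1 : ∑ i, (Pi.single j 1 : Fin L → ℝ) i * w i = w j := by
        simp [Pi.single_apply]
      have h2 : ∑ i, (Pi.single j 1 : Fin L → ℝ) i ^ 2 = 1 := by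
        simp [Pi.single_apply, ite_pow]
      rw [h1, h2, one_mul] at hc
      exact hc
    rw [← hwj]
    rcases eq_or_lt_of_le ht0 with h | h
    · rw [← h]; positivity
    · rw [le_div_iff₀ hlam]
      nlinarith [mul_le_mul_of_nonneg_left hcs hlam.le]
  calc ∑ j, B⁻¹ j j ≤ ∑ _j : Fin L, 1 / lam := Finset.sum_le_sum fun j _ => hbound j
    _ = L / lam := by simp [Finset.sum_const, div_eq_mul_inv]

/-- doc -/
theorem expected_sq_norm_ols_error_le
    {Ω : Type*} [MeasureSpace Ω] (hprob : IsProbabilityMeasure (ℙ : Measure Ω))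
    (N P L : ℕ) (X : Matrix (Fin N) (Fin P) ℝ) (V : Matrix (Fin N) (Fin L) ℝ)
    (aN lN : ℝ) (haN : 0 < aN) (hlN : 0 < lN)
    (hX : X.rank = P)
    (hσ : ∀ v : Fin L → ℝ, ∑ i, v i ^ 2 = 1 →
      lN ≤ Real.sqrt (∑ i, (((1 : Matrix (Fin N) (Fin N) ℝ) - proj X) * V).mulVec v i ^ 2))
    (ε : Ω → Fin N → ℝ) (σy : ℝ)
    (hmeas : ∀ i, Measurable fun ω => ε ω i)
    (hL2 : ∀ i, MemLp (fun ω => ε ω i) 2)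
    (hmean : ∀ i, ∫ ω, ε ω i = 0)
    (hcov : ∀ i j, ∫ ω, ε ω i * ε ω j = if i = j then σy ^ 2 else 0) :
    ∫ ω, ∑ j, ((((aN • V)ᵀ * ((1 : Matrix (Fin N) (Fin N) ℝ) - proj X) * (aN • V))⁻¹ *
        (aN • V)ᵀ * ((1 : Matrix (Fin N) (Fin N) ℝ) - proj X)).mulVec (ε ω) j) ^ 2
      ≤ σy ^ 2 * L / (aN ^ 2 * lN ^ 2) := by
  set Q : Matrix (Fin N) (Fin N) ℝ := (1 : Matrix (Fin N) (Fin N) ℝ) - proj X with hQdef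
  set C : Matrix (Fin N) (Fin L) ℝ := aN • V with hCdef
  set B : Matrix (Fin L) (Fin L) ℝ := Cᵀ * Q * C with hBdef
  set A : Matrix (Fin L) (Fin N) ℝ := B⁻¹ * Cᵀ * Q with hAdef
  -- X has injective mulVec
  have hXinj : Function.Injective X.mulVec := by
    rw [← Matrix.coe_mulVecLin]
    rw [← LinearMap.ker_eq_bot]
    rw [← Submodule.finrank_eq_zero]
    have h := X.mulVecLin.finrank_range_add_finrank_ker
    have hr : Module.finrank ℝ (LinearMap.range X.mulVecLin) = P := hX
    rw [hr, Module.finrank_fintype_fun_eq_card, Fintype.card_fin] at h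
    omega
  -- XᵀX is invertible
  have hXTX : IsUnit (Xᵀ * X).det := by
    rw [← Matrix.isUnit_iff_isUnit_det]
    rw [← Matrix.mulVec_injective_iff_isUnit]
    intro a b hab
    apply hXinj
    have hd : (Xᵀ * X) *ᵥ (a - b) = 0 := by
      rw [Matrix.mulVec_sub, hab, sub_self]
    have h2 : Xᵀ *ᵥ (X *ᵥ (a - b)) = 0 := by
      rwa [Matrix.mulVec_mulVec]
    have h3 : (X *ᵥ (a - b)) ⬝ᵥ (X *ᵥ (a - b)) = 0 := by
      have e : (a - b) ⬝ᵥ (Xᵀ *ᵥ (X *ᵥ (a - b))) = (X *ᵥ (a - b)) ⬝ᵥ (X *ᵥ (a - b)) := by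
        rw [Matrix.dotProduct_mulVec, Matrix.vecMul_transpose]
      rw [← e, h2, dotProduct_zero]
    have h4 := dotProduct_self_eq_zero.mp h3
    have h5 : X *ᵥ a - X *ᵥ b = 0 := by rw [← Matrix.mulVec_sub]; exact h4
    exact sub_eq_zero.mp h5
  -- symmetry and idempotence of Q
  have hPT : (proj X)ᵀ = proj X := by
    unfold proj
    rw [Matrix.transpose_mul, Matrix.transpose_mul, Matrix.transpose_transpose,
      Matrix.transpose_nonsing_inv, Matrix.transpose_mul, Matrix.transpose_transpose,
      Matrix.mul_assoc]
  have hQT : Qᵀ = Q := by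
    rw [hQdef, Matrix.transpose_sub, Matrix.transpose_one, hPT]
  have hPP : proj X * proj X = proj X := by
    unfold proj
    calc X * (Xᵀ * X)⁻¹ * Xᵀ * (X * (Xᵀ * X)⁻¹ * Xᵀ)
        = X * ((Xᵀ * X)⁻¹ * (Xᵀ * X) * (Xᵀ * X)⁻¹) * Xᵀ := by
          simp only [Matrix.mul_assoc]
      _ = X * (Xᵀ * X)⁻¹ * Xᵀ := by
          rw [Matrix.nonsing_inv_mul _ hXTX, Matrix.one_mul]
  have hQQ : Q * Q = Q := by
    rw [hQdef]
    simp only [Matrix.sub_mul, Matrix.mul_sub, Matrix.one_mul, Matrix.mul_one, hPP]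
    abel
  -- B is symmetric
  have hBT : Bᵀ = B := by
    rw [hBdef, Matrix.transpose_mul, Matrix.transpose_mul, Matrix.transpose_transpose, hQT,
      ← Matrix.mul_assoc]
  -- B as a Gram matrix
  have hBeq : B = (aN ^ 2) • ((Q * V)ᵀ * (Q * V)) := by
    rw [hBdef, hCdef, Matrix.transpose_smul, Matrix.smul_mul, Matrix.smul_mul,
      Matrix.mul_smul, smul_smul, ← sq]
    congr 1
    rw [Matrix.transpose_mul, hQT]
    rw [Matrix.mul_assoc, Matrix.mul_assoc, ← Matrix.mul_assoc Q Q V, hQQ]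
  -- quadratic form of B
  have hform : ∀ v : Fin L → ℝ, v ⬝ᵥ B *ᵥ v = aN ^ 2 * ∑ i, ((Q * V) *ᵥ v) i ^ 2 := by
    intro v
    rw [hBeq, Matrix.smul_mulVec, dotProduct_smul, smul_eq_mul]
    congr 1
    rw [← Matrix.mulVec_mulVec, Matrix.dotProduct_mulVec, Matrix.vecMul_transpose]
    simp [dotProduct, sq]
  -- lower bound on quadratic form
  have hq : ∀ v : Fin L → ℝ, (aN ^ 2 * lN ^ 2) * ∑ i, v i ^ 2 ≤ v ⬝ᵥ B *ᵥ v := by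
    intro v
    rw [hform]
    rcases eq_or_ne v 0 with rfl | hv
    · simp
    · have hsum : 0 < ∑ i, v i ^ 2 := by
        obtain ⟨i, hi⟩ := Function.ne_iff.mp hv
        exact Finset.sum_pos' (fun j _ => sq_nonneg _)
          ⟨i, Finset.mem_univ i, sq_pos_of_ne_zero hi⟩
      set s : ℝ := Real.sqrt (∑ i, v i ^ 2) with hsdef
      have hs : 0 < s := Real.sqrt_pos.mpr hsum
      have hs2 : s ^ 2 = ∑ i, v i ^ 2 := Real.sq_sqrt hsum.le
      have hu : ∑ i, (s⁻¹ • v) i ^ 2 = 1 := by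
        simp only [Pi.smul_apply, smul_eq_mul, mul_pow, ← Finset.mul_sum]
        rw [← hs2]; field_simp
      have h := hσ (s⁻¹ • v) hu
      have hnn : 0 ≤ ∑ i, ((Q * V) *ᵥ (s⁻¹ • v)) i ^ 2 :=
        Finset.sum_nonneg fun i _ => sq_nonneg _
      have h2 : lN ^ 2 ≤ ∑ i, ((Q * V) *ᵥ (s⁻¹ • v)) i ^ 2 := by
        nlinarith [Real.sq_sqrt hnn, Real.sqrt_nonneg (∑ i, ((Q * V) *ᵥ (s⁻¹ • v)) i ^ 2)]
      rw [Matrix.mulVec_smul] at h2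
      simp only [Pi.smul_apply, smul_eq_mul, mul_pow, ← Finset.mul_sum] at h2
      have h4 : lN ^ 2 * s ^ 2 ≤ ∑ i, ((Q * V) *ᵥ v) i ^ 2 := by
        have h5 := mul_le_mul_of_nonneg_right h2 (sq_nonneg s)
        calc lN ^ 2 * s ^ 2 ≤ (s⁻¹ ^ 2 * ∑ i, ((Q * V) *ᵥ v) i ^ 2) * s ^ 2 := h5
          _ = ∑ i, ((Q * V) *ᵥ v) i ^ 2 := by field_simp
      rw [← hs2]
      calc aN ^ 2 * lN ^ 2 * s ^ 2 = aN ^ 2 * (lN ^ 2 * s ^ 2) := by ring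
        _ ≤ aN ^ 2 * ∑ i, ((Q * V) *ᵥ v) i ^ 2 :=
          mul_le_mul_of_nonneg_left h4 (by positivity)
  obtain ⟨hdetB, htr⟩ := trace_inv_le hBT (by positivity : (0:ℝ) < aN ^ 2 * lN ^ 2) hq
  -- A * Aᵀ = B⁻¹
  have hBinvT : (B⁻¹)ᵀ = B⁻¹ := by rw [Matrix.transpose_nonsing_inv, hBT]
  have hAAT : A * Aᵀ = B⁻¹ := by
    rw [hAdef, Matrix.transpose_mul, Matrix.transpose_mul, Matrix.transpose_transpose,
      hQT, hBinvT]
    rw [← Matrix.mul_assoc, ← Matrix.mul_assoc, Matrix.mul_assoc (B⁻¹ * Cᵀ) Q Q, hQQ]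
    rw [Matrix.mul_assoc B⁻¹ Cᵀ Q, Matrix.mul_assoc B⁻¹ (Cᵀ * Q) C, ← hBdef, Matrix.nonsing_inv_mul _ hdetB, Matrix.one_mul]
  -- Frobenius norm bound
  have hfrob : ∑ j, ∑ i, A j i ^ 2 = ∑ j, B⁻¹ j j := by
    rw [← hAAT]
    refine Finset.sum_congr rfl fun j _ => ?_
    rw [Matrix.mul_apply]
    exact Finset.sum_congr rfl fun i _ => by rw [Matrix.transpose_apply, sq]
  have hS : ∑ j, ∑ i, A j i ^ 2 ≤ L / (aN ^ 2 * lN ^ 2) := hfrob ▸ htr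
  -- integrability of products
  have hint : ∀ i k : Fin N, Integrable (fun ω => ε ω i * ε ω k) ℙ := by
    intro i k
    have h1 := ((hL2 i).add (hL2 k)).integrable_sq
    have h2 := (hL2 i).integrable_sq
    have h3 := (hL2 k).integrable_sq
    exact (((h1.sub h2).sub h3).const_mul (1 / 2 : ℝ)).congr
      (Filter.Eventually.of_forall fun ω => by simp only [Pi.sub_apply, Pi.add_apply]; ring)
  -- rewrite the integrand
  have hrw : (fun ω => ∑ j, ((A *ᵥ (ε ω)) j) ^ 2) =
      fun ω => ∑ j, ∑ i, ∑ k, (A j i * A j k) * (ε ω i * ε ω k) := by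
    funext ω
    refine Finset.sum_congr rfl fun j _ => ?_
    rw [show (A *ᵥ (ε ω)) j = ∑ i, A j i * ε ω i from rfl]
    rw [sq, Finset.sum_mul_sum]
    exact Finset.sum_congr rfl fun i _ => Finset.sum_congr rfl fun k _ => by ring
  calc ∫ ω, ∑ j, ((A *ᵥ (ε ω)) j) ^ 2
      = ∑ j, ∑ i, ∑ k, (A j i * A j k) * ∫ ω, ε ω i * ε ω k := by
        rw [hrw, integral_finset_sum]
        · refine Finset.sum_congr rfl fun j _ => ?_
          rw [integral_finset_sum]
          · refine Finset.sum_congr rfl fun i _ => ?_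
            rw [integral_finset_sum]
            · exact Finset.sum_congr rfl fun k _ => integral_const_mul _ _
            · exact fun k _ => (hint i k).const_mul _
          · exact fun i _ => integrable_finset_sum _ fun k _ => (hint i k).const_mul _
        · exact fun j _ => integrable_finset_sum _ fun i _ =>
            integrable_finset_sum _ fun k _ => (hint i k).const_mul _
    _ = ∑ j, ∑ i, A j i ^ 2 * σy ^ 2 := by
        refine Finset.sum_congr rfl fun j _ => Finset.sum_congr rfl fun i _ => ?_
        simp only [hcov, mul_ite, mul_zero, Finset.sum_ite_eq, Finset.mem_univ, if_true]
        ring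
    _ ≤ σy ^ 2 * L / (aN ^ 2 * lN ^ 2) := by
        have h1 : ∑ j, ∑ i, A j i ^ 2 * σy ^ 2 = σy ^ 2 * ∑ j, ∑ i, A j i ^ 2 := by
          rw [Finset.mul_sum]
          exact Finset.sum_congr rfl fun j _ => by
            rw [Finset.mul_sum]
            exact Finset.sum_congr rfl fun i _ => by ring
        rw [h1, mul_div_assoc]
        exact mul_le_mul_of_nonneg_left hS (sq_nonneg σy)
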